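/- Let T be a topological space, X a Baire topological group, Y a topological group, K ⊆ T a compact co-Namioka subspace, and h : T × X → Y a separately continuous map such that for every t ∈ T the map x ↦ h(t,x) is a group homomorphism. Then the restriction of h to K × X is jointly continuous. -/

import Mathlib

open Filter Set Topology
open scoped NNReal

/-- Urysohn-type separation at the identity of a topological group: for any neighborhood `W`
of `1` there is a continuous real function vanishing at `1` whose sublevel set `{F < 1}`
is contained in `W`. -/
theorem exists_sep_fun {Y : Type*} [Group Y] [TopologicalSpace Y] [IsTopologicalGroup Y]
    {W : Set Y} (hW : W ∈ 𝓝 (1 : Y)) :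
    ∃ F : Y → ℝ, Continuous F ∧ F 1 = 0 ∧ ∀ y : Y, F y < 1 → y ∈ W := by
  classical
  have h2lt : (2:ℝ≥0)⁻¹ < 1 := by
    rw [← NNReal.coe_lt_coe]; push_cast; norm_num
  -- step: from a neighborhood of 1 produce a symmetric one with triple products inside
  have hstep : ∀ U : Set Y, U ∈ 𝓝 (1 : Y) → ∃ V : Set Y, V ∈ 𝓝 (1 : Y) ∧
      (∀ y ∈ V, y⁻¹ ∈ V) ∧ (∀ a ∈ V, ∀ b ∈ V, ∀ c ∈ V, a * b * c ∈ U) := by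
    intro U hU
    obtain ⟨V₁, hV₁, -, -, hV₁U⟩ := exists_closed_nhds_one_inv_eq_mul_subset hU
    obtain ⟨V₂, hV₂, -, hV₂sym, hV₂V₁⟩ := exists_closed_nhds_one_inv_eq_mul_subset hV₁
    refine ⟨V₂, hV₂, ?_, ?_⟩
    · intro y hy
      rw [← hV₂sym]
      exact Set.inv_mem_inv.2 hy
    · intro a ha b hb c hc
      have hab : a * b ∈ V₁ := hV₂V₁ (Set.mul_mem_mul ha hb)
      have hc1 : c ∈ V₁ := by
        have := hV₂V₁ (Set.mul_mem_mul hc (mem_of_mem_nhds hV₂))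
        simpa using this
      exact hV₁U (Set.mul_mem_mul hab hc1)
  choose! step hstep₁ hstep₂ hstep₃ using hstep
  -- the decreasing sequence of symmetric neighborhoods
  let V : ℕ → {S : Set Y // S ∈ 𝓝 (1 : Y)} := fun n =>
    Nat.rec ⟨step W, hstep₁ W hW⟩ (fun _ p => ⟨step p.1, hstep₁ p.1 p.2⟩) n
  have hVsucc : ∀ n, (V (n + 1)).1 = step (V n).1 := fun n => rfl
  have hV0 : (V 0).1 = step W := rfl
  have hVsym : ∀ n, ∀ y ∈ (V n).1, y⁻¹ ∈ (V n).1 := by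
    intro n
    cases n with
    | zero => exact hstep₂ W hW
    | succ m => exact hstep₂ (V m).1 (V m).2
  have hVtriple : ∀ n, ∀ a ∈ (V (n+1)).1, ∀ b ∈ (V (n+1)).1, ∀ c ∈ (V (n+1)).1,
      a * b * c ∈ (V n).1 := by
    intro n
    exact hstep₃ (V n).1 (V n).2
  have hone : ∀ n, (1 : Y) ∈ (V n).1 := fun n => mem_of_mem_nhds (V n).2
  have hVsub : ∀ n, (V (n+1)).1 ⊆ (V n).1 := by
    intro n y hy
    have := hVtriple n y hy 1 (hone (n+1)) 1 (hone (n+1))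
    simpa using this
  have hVanti : ∀ {m n : ℕ}, m ≤ n → (V n).1 ⊆ (V m).1 := by
    intro m n hmn
    induction hmn with
    | refl => exact fun _ h => h
    | step h ih => exact fun y hy => ih (hVsub _ hy)
  have hV0W : (V 0).1 ⊆ W := by
    intro y hy
    have h1W : (1 : Y) ∈ step W := hV0 ▸ hone 0
    have := hstep₃ W hW y hy 1 h1W 1 h1W
    simpa using this
  -- the pre-distance
  set pen : Y → ℕ → ℝ≥0 := fun y n => if y ∈ (V n).1 then (2 : ℝ≥0)⁻¹ ^ n else 1 with hpen
  set de : Y → Y → ℝ≥0 := fun a b => ⨅ n, pen (a⁻¹ * b) n with hde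
  have hpen0 : ∀ y, pen y 0 = 1 := by
    intro y; simp [hpen]
  have hpen_le_one : ∀ y n, pen y n ≤ 1 := by
    intro y n
    by_cases hy : y ∈ (V n).1
    · simp only [hpen, if_pos hy]
      exact pow_le_one' (by norm_num) n
    · simp [hpen, if_neg hy]
  have hde_le : ∀ a b n, de a b ≤ pen (a⁻¹ * b) n := fun a b n =>
    ciInf_le (OrderBot.bddBelow _) n
  have hde_le_one : ∀ a b, de a b ≤ 1 := fun a b => (hde_le a b 0).trans (by rw [hpen0])
  have hmem_of_lt : ∀ a b m, de a b < (2 : ℝ≥0)⁻¹ ^ m → a⁻¹ * b ∈ (V (m+1)).1 := by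
    intro a b m hlt
    by_contra hy
    have hub : ∀ n, (2 : ℝ≥0)⁻¹ ^ m ≤ pen (a⁻¹ * b) n := by
      intro n
      by_cases hn : a⁻¹ * b ∈ (V n).1
      · have hnm : n ≤ m := by
          by_contra hc
          push_neg at hc
          exact hy (hVanti (Nat.succ_le_of_lt hc) hn)
        simp only [hpen, if_pos hn]
        exact NNReal.pow_antitone_exp _ _ hnm (by norm_num)
      · simp only [hpen, if_neg hn]
        exact pow_le_one' (by norm_num) m
    exact hlt.not_ge (le_ciInf hub)
  have hde_self : ∀ a, de a a = 0 := by
    intro a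
    refine le_antisymm ?_ zero_le
    by_contra hpos
    rw [not_le] at hpos
    obtain ⟨n, hn⟩ := NNReal.exists_pow_lt_of_lt_one hpos h2lt
    have : de a a ≤ (2:ℝ≥0)⁻¹ ^ n := by
      refine (hde_le a a n).trans ?_
      rw [inv_mul_cancel]
      simp only [hpen, if_pos (hone n)]
      exact le_rfl
    exact (this.trans_lt hn).false
  have hde_symm : ∀ a b, de a b = de b a := by
    intro a b
    simp only [hde]
    refine iInf_congr fun n => ?_
    have : a⁻¹ * b ∈ (V n).1 ↔ b⁻¹ * a ∈ (V n).1 := by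
      constructor
      · intro hmem
        have := hVsym n _ hmem
        simpa [mul_inv_rev] using this
      · intro hmem
        have := hVsym n _ hmem
        simpa [mul_inv_rev] using this
    simp only [hpen]
    by_cases hx : a⁻¹ * b ∈ (V n).1
    · rw [if_pos hx, if_pos (this.1 hx)]
    · rw [if_neg hx, if_neg (fun hc => hx (this.2 hc))]
  -- the chain inequality
  have hchain : ∀ x₁ x₂ x₃ x₄ : Y,
      de x₁ x₄ ≤ 2 * max (de x₁ x₂) (max (de x₂ x₃) (de x₃ x₄)) := by
    intro x₁ x₂ x₃ x₄
    set M := max (de x₁ x₂) (max (de x₂ x₃) (de x₃ x₄)) with hM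
    have hd1 : de x₁ x₂ ≤ M := le_max_left _ _
    have hd2 : de x₂ x₃ ≤ M := le_trans (le_max_left _ _) (le_max_right _ _)
    have hd3 : de x₃ x₄ ≤ M := le_trans (le_max_right _ _) (le_max_right _ _)
    have hkey : ∀ m : ℕ, M < (2:ℝ≥0)⁻¹ ^ m → de x₁ x₄ ≤ (2:ℝ≥0)⁻¹ ^ m := by
      intro m hm
      have h12 := hmem_of_lt _ _ m (lt_of_le_of_lt hd1 hm)
      have h23 := hmem_of_lt _ _ m (lt_of_le_of_lt hd2 hm)
      have h34 := hmem_of_lt _ _ m (lt_of_le_of_lt hd3 hm)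
      have hprod : x₁⁻¹ * x₄ ∈ (V m).1 := by
        have := hVtriple m _ h12 _ h23 _ h34
        have e : (x₁⁻¹ * x₂) * (x₂⁻¹ * x₃) * (x₃⁻¹ * x₄) = x₁⁻¹ * x₄ := by group
        rwa [e] at this
      refine (hde_le x₁ x₄ m).trans ?_
      simp only [hpen, if_pos hprod]
      exact le_rfl
    by_cases hM0 : M = 0
    · have : de x₁ x₄ = 0 := by
        refine le_antisymm ?_ zero_le
        by_contra hpos
        rw [not_le] at hpos
        obtain ⟨n, hn⟩ := NNReal.exists_pow_lt_of_lt_one hpos h2lt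
        have := hkey n (by rw [hM0]; positivity)
        exact (this.trans_lt hn).false
      rw [this]
      exact zero_le
    · have hMpos : 0 < M := pos_iff_ne_zero.2 hM0
      rcases le_or_gt 1 (2 * M) with hc | hc
      · exact (hde_le_one x₁ x₄).trans hc
      · have hex : ∃ m : ℕ, (2:ℝ≥0)⁻¹ ^ m ≤ 2 * M := by
          obtain ⟨n, hn⟩ := NNReal.exists_pow_lt_of_lt_one (mul_pos two_pos hMpos)
            h2lt
          exact ⟨n, hn.le⟩
        have hm0 : Nat.find hex ≠ 0 := by
          intro h0
          have := Nat.find_spec hex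
          rw [h0, pow_zero] at this
          exact hc.not_ge this
        obtain ⟨m', hm'⟩ := Nat.exists_eq_succ_of_ne_zero hm0
        have hspec : (2:ℝ≥0)⁻¹ ^ (m' + 1) ≤ 2 * M := by
          have := Nat.find_spec hex
          rwa [hm'] at this
        have hmin : ¬ ((2:ℝ≥0)⁻¹ ^ m' ≤ 2 * M) := by
          have := Nat.find_min hex (m := m') (by omega)
          exact this
        push_neg at hmin
        have hMlt : M < (2:ℝ≥0)⁻¹ ^ (m' + 1) := by
          have h2 : 2 * M < 2 * (2:ℝ≥0)⁻¹ ^ (m' + 1) := by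
            calc 2 * M < (2:ℝ≥0)⁻¹ ^ m' := hmin
            _ = 2 * (2:ℝ≥0)⁻¹ ^ (m' + 1) := by
                rw [pow_succ]
                rw [mul_comm ((2:ℝ≥0)⁻¹ ^ m') _, ← mul_assoc]
                norm_num
          exact lt_of_mul_lt_mul_left h2 zero_le
        exact (hkey (m'+1) hMlt).trans hspec
  -- the distance and the function F
  have hDle := PseudoMetricSpace.dist_ofPreNNDist_le de hde_self hde_symm
  have hdeD := PseudoMetricSpace.le_two_mul_dist_ofPreNNDist de hde_self hde_symm hchain
  set I := PseudoMetricSpace.ofPreNNDist de hde_self hde_symm with hI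
  set D : Y → Y → ℝ := fun a b => @dist Y I.toDist a b with hD
  have htri : ∀ a b c, D a c ≤ D a b + D b c := fun a b c => @dist_triangle Y I a b c
  have hcomm : ∀ a b, D a b = D b a := fun a b => @dist_comm Y I a b
  have hself : ∀ a, D a a = 0 := fun a => @dist_self Y I a
  have hDde : ∀ a b, D a b ≤ (de a b : ℝ) := fun a b => hDle a b
  have hdeD' : ∀ a b, (de a b : ℝ) ≤ 2 * D a b := fun a b => hdeD a b
  have hDnonneg : ∀ a b, 0 ≤ D a b := fun a b => @dist_nonneg Y I a b
  -- continuity of D 1 ·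
  have hDcont : Continuous fun y => D 1 y := by
    rw [continuous_iff_continuousAt]
    intro y₀
    rw [ContinuousAt, Metric.tendsto_nhds]
    intro ε hε
    obtain ⟨n, hn⟩ := exists_pow_lt_of_lt_one hε (by norm_num : (2:ℝ)⁻¹ < 1)
    have hnb : {y | y₀⁻¹ * y ∈ (V n).1} ∈ 𝓝 y₀ := by
      have hc : ContinuousAt (fun y : Y => y₀⁻¹ * y) y₀ :=
        (continuous_const.mul continuous_id).continuousAt
      have := hc.preimage_mem_nhds (by rw [inv_mul_cancel]; exact (V n).2)
      exact this
    filter_upwards [hnb] with y hy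
    have h1 : de y₀ y ≤ (2:ℝ≥0)⁻¹ ^ n := by
      refine (hde_le y₀ y n).trans ?_
      simp only [hpen, if_pos hy]
      exact le_rfl
    have h1' : D y₀ y ≤ (2:ℝ)⁻¹ ^ n := by
      refine (hDde y₀ y).trans ?_
      have := NNReal.coe_le_coe.2 h1
      push_cast at this
      convert this using 2
    have h2 : D 1 y ≤ D 1 y₀ + D y₀ y := htri 1 y₀ y
    have h3 : D 1 y₀ ≤ D 1 y + D y₀ y := by
      have := htri 1 y y₀
      rwa [hcomm y y₀] at this
    rw [Real.dist_eq, abs_sub_lt_iff]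
    constructor <;> linarith
  refine ⟨fun y => min 1 (8 * D 1 y), continuous_const.min (continuous_const.mul hDcont),
    by simp [hself 1], ?_⟩
  intro y hy
  have h8 : 8 * D 1 y < 1 := by
    rcases min_lt_iff.1 hy with hcon | hok
    · exact absurd hcon (lt_irrefl 1)
    · exact hok
  have hD4 : (de 1 y : ℝ) < 1/4 := by
    have := hdeD' 1 y
    linarith
  have hde4 : de 1 y < (2:ℝ≥0)⁻¹ ^ 2 := by
    rw [← NNReal.coe_lt_coe] at *
    push_cast
    push_cast at hD4
    linarith
  have := hmem_of_lt 1 y 2 hde4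
  rw [inv_one, one_mul] at this
  exact hV0W (hVanti (Nat.zero_le 3) this)

universe u v

/-- A topological space `X` is co-Namioka if for every Baire space `Y` and every separately
continuous function `f : X × Y → ℝ` there is a dense `G_δ` set `G ⊆ Y` such that `f` is
continuous at each point of `X × G`. -/
def CoNamioka (X : Type u) [TopologicalSpace X] : Prop :=
  ∀ (Y : Type v) (_ : TopologicalSpace Y), BaireSpace Y →
    ∀ f : X × Y → ℝ, (∀ x, Continuous fun y => f (x, y)) →
      (∀ y, Continuous fun x => f (x, y)) →
      ∃ G : Set Y, Dense G ∧ IsGδ G ∧ ∀ x : X, ∀ y ∈ G, ContinuousAt f (x, y)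

theorem jointly_continuous_on_coNamioka_compact {T : Type u} {X : Type u} {Y : Type u}
    [TopologicalSpace T]
    [Group X] [TopologicalSpace X] [IsTopologicalGroup X] [BaireSpace X]
    [Group Y] [TopologicalSpace Y] [IsTopologicalGroup Y]
    (K : Set T) (hK : IsCompact K) (hKcN : CoNamioka.{u,u} K)
    (h : T × X → Y)
    (hcont₁ : ∀ t : T, Continuous fun x : X => h (t, x))
    (hcont₂ : ∀ x : X, Continuous fun t : T => h (t, x))
    (hhom : ∀ t : T, ∀ x₁ x₂ : X, h (t, x₁ * x₂) = h (t, x₁) * h (t, x₂)) :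
    ContinuousOn h (K ×ˢ (Set.univ : Set X)) := by
  intro p hp
  obtain ⟨t₀, x₀⟩ := p
  have ht₀ : t₀ ∈ K := hp.1
  show Filter.Tendsto h (𝓝[K ×ˢ (Set.univ : Set X)] (t₀, x₀)) (𝓝 (h (t₀, x₀)))
  rw [Filter.tendsto_def]
  intro N hN
  -- the basic neighborhood of 1 in Y
  have hV₀ : (fun v => h (t₀, x₀) * v) ⁻¹' N ∈ 𝓝 (1 : Y) := by
    have hc : ContinuousAt (fun v : Y => h (t₀, x₀) * v) 1 :=
      (continuous_const.mul continuous_id).continuousAt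
    apply hc.preimage_mem_nhds
    simpa using hN
  -- a symmetric neighborhood S with 4-fold products in V₀
  obtain ⟨S₁, hS₁, -, -, hS₁V⟩ := exists_closed_nhds_one_inv_eq_mul_subset hV₀
  obtain ⟨S, hS, -, hSsym, hSS₁⟩ := exists_closed_nhds_one_inv_eq_mul_subset hS₁
  have hSinv : ∀ y ∈ S, y⁻¹ ∈ S := fun y hy => by
    rw [← hSsym]; exact Set.inv_mem_inv.2 hy
  have h4 : ∀ a ∈ S, ∀ b ∈ S, ∀ c ∈ S, ∀ d ∈ S, h (t₀, x₀) * (a * b * c * d) ∈ N := by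
    intro a ha b hb c hc d hd
    have h1 : a * b ∈ S₁ := hSS₁ (Set.mul_mem_mul ha hb)
    have h2 : c * d ∈ S₁ := hSS₁ (Set.mul_mem_mul hc hd)
    have h3 := hS₁V (Set.mul_mem_mul h1 h2)
    have he : a * b * (c * d) = a * b * c * d := by group
    rw [he] at h3
    exact h3
  -- the separating function and the separately continuous Ψ
  obtain ⟨F, hFc, hF1, hFS⟩ := exists_sep_fun hS
  set Ψ : ↥K × X → ℝ := fun q => F ((h (t₀, q.2))⁻¹ * h ((q.1 : T), q.2)) with hΨ
  have hΨ1 : ∀ k : ↥K, Continuous fun x : X => Ψ (k, x) := by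
    intro k
    exact hFc.comp (((hcont₁ t₀).inv).mul (hcont₁ (k : T)))
  have hΨ2 : ∀ x : X, Continuous fun k : ↥K => Ψ (k, x) := by
    intro x
    have hc : Continuous fun k : ↥K => (h (t₀, x))⁻¹ * h ((k : T), x) :=
      continuous_const.mul ((hcont₂ x).comp continuous_subtype_val)
    exact hFc.comp hc
  obtain ⟨G, hGd, -, hG⟩ := hKcN X _ inferInstance Ψ hΨ1 hΨ2
  obtain ⟨g, hg⟩ := hGd.nonempty
  set k₀ : ↥K := ⟨t₀, ht₀⟩ with hk₀
  have hΨ0 : Ψ (k₀, g) = 0 := by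
    simp only [hΨ, hk₀]
    rw [inv_mul_cancel, hF1]
  have hCA : ContinuousAt Ψ (k₀, g) := hG k₀ g hg
  have hpre : Ψ ⁻¹' Set.Iio 1 ∈ 𝓝 (k₀, g) := by
    apply hCA.preimage_mem_nhds
    rw [hΨ0]
    exact Iio_mem_nhds one_pos
  rw [mem_nhds_prod_iff] at hpre
  obtain ⟨Uk, hUk, Ux, hUx, hsub⟩ := hpre
  have key1 : ∀ k : ↥K, k ∈ Uk → ∀ x ∈ Ux, (h (t₀, x))⁻¹ * h ((k : T), x) ∈ S := by
    intro k hk x hx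
    have : Ψ (k, x) < 1 := hsub (Set.mk_mem_prod hk hx)
    exact hFS _ this
  -- neighborhoods of 1 in X
  have hW₁ : (fun w : X => g * w) ⁻¹' Ux ∈ 𝓝 (1 : X) := by
    have hc : ContinuousAt (fun w : X => g * w) 1 :=
      (continuous_const.mul continuous_id).continuousAt
    apply hc.preimage_mem_nhds
    simpa using hUx
  have hW₂ : (fun w : X => (h (t₀, g))⁻¹ * h (t₀, g * w)) ⁻¹' S ∈ 𝓝 (1 : X) := by
    have hc : Continuous fun w : X => (h (t₀, g))⁻¹ * h (t₀, g * w) :=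
      continuous_const.mul ((hcont₁ t₀).comp (continuous_const.mul continuous_id))
    apply hc.continuousAt.preimage_mem_nhds
    have : (h (t₀, g))⁻¹ * h (t₀, g * 1) = 1 := by rw [mul_one, inv_mul_cancel]
    simpa [this] using hS
  -- the neighborhood of k₀ in K
  have hUk' : {k : ↥K | (h (t₀, x₀))⁻¹ * h ((k : T), x₀) ∈ S} ∈ 𝓝 k₀ := by
    have hc : Continuous fun k : ↥K => (h (t₀, x₀))⁻¹ * h ((k : T), x₀) :=
      continuous_const.mul ((hcont₂ x₀).comp continuous_subtype_val)
    apply hc.continuousAt.preimage_mem_nhds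
    have : (h (t₀, x₀))⁻¹ * h ((k₀ : T), x₀) = 1 := by
      rw [hk₀]; exact inv_mul_cancel _
    rw [this]
    exact hS
  have hUkk : Uk ∩ {k : ↥K | (h (t₀, x₀))⁻¹ * h ((k : T), x₀) ∈ S} ∈ 𝓝 k₀ :=
    Filter.inter_mem hUk hUk'
  rw [nhds_subtype] at hUkk
  obtain ⟨UT, hUT, hUTsub⟩ := Filter.mem_comap.1 hUkk
  -- the neighborhood of x₀ in X
  have hUX : (fun x : X => x₀⁻¹ * x) ⁻¹'
      (((fun w : X => g * w) ⁻¹' Ux) ∩ ((fun w : X => (h (t₀, g))⁻¹ * h (t₀, g * w)) ⁻¹' S))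
      ∈ 𝓝 x₀ := by
    have hc : ContinuousAt (fun x : X => x₀⁻¹ * x) x₀ :=
      (continuous_const.mul continuous_id).continuousAt
    apply hc.preimage_mem_nhds
    rw [inv_mul_cancel]
    exact Filter.inter_mem hW₁ hW₂
  -- conclude
  rw [mem_nhdsWithin_iff_exists_mem_nhds_inter]
  refine ⟨UT ×ˢ ((fun x : X => x₀⁻¹ * x) ⁻¹'
      (((fun w : X => g * w) ⁻¹' Ux) ∩ ((fun w : X => (h (t₀, g))⁻¹ * h (t₀, g * w)) ⁻¹' S))),
    prod_mem_nhds hUT hUX, ?_⟩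
  · rintro ⟨t, x⟩ ⟨⟨htU, hxU⟩, htK, -⟩
    show h (t, x) ∈ N
    have hkmem : (⟨t, htK⟩ : ↥K) ∈ Uk ∩ {k : ↥K | (h (t₀, x₀))⁻¹ * h ((k : T), x₀) ∈ S} :=
      hUTsub htU
    obtain ⟨hk1, hk2⟩ := hkmem
    obtain ⟨hw1, hw2⟩ := hxU
    -- notation
    have ha : (h (t₀, x₀))⁻¹ * h (t, x₀) ∈ S := hk2
    have hb : (h (t₀, g))⁻¹ * h (t, g) ∈ S := key1 ⟨t, htK⟩ hk1 g (mem_of_mem_nhds hUx)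
    have hc : (h (t₀, g))⁻¹ * h (t₀, g * (x₀⁻¹ * x)) ∈ S := hw2
    have hd : (h (t₀, g * (x₀⁻¹ * x)))⁻¹ * h (t, g * (x₀⁻¹ * x)) ∈ S :=
      key1 ⟨t, htK⟩ hk1 (g * (x₀⁻¹ * x)) hw1
    have hmem := h4 _ ha _ (hSinv _ hb) _ hc _ hd
    have heq : h (t, x) = h (t₀, x₀) *
        (((h (t₀, x₀))⁻¹ * h (t, x₀)) * ((h (t₀, g))⁻¹ * h (t, g))⁻¹ *
          ((h (t₀, g))⁻¹ * h (t₀, g * (x₀⁻¹ * x))) *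
          ((h (t₀, g * (x₀⁻¹ * x)))⁻¹ * h (t, g * (x₀⁻¹ * x)))) := by
      have hx_eq : h (t, x) = h (t, x₀) * h (t, x₀⁻¹ * x) := by
        rw [← hhom t x₀ (x₀⁻¹ * x), mul_inv_cancel_left]
      rw [hx_eq, hhom t g (x₀⁻¹ * x)]
      group
    rw [heq]
    exact hmem
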